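/- Let d ≥ 3 be an integer, h_1, …, h_d ∈ (0, 1), H = ∏_{l=1}^d h_l, let 0 < Δ ≤ 1 satisfy Δ ≥ H^{2/d}, let T > 0, A > 0, ρ > 0, and let k : [0, T]² → ℝ be measurable and satisfy: (i) |k(t, s)| ≤ A/H for all s, t; (ii) |k(t, s)| ≤ A·(3^{d/2} |t − s|^{−d/2} + 1) whenever |t − s| ≥ 3Δ; (iii) |k(t, s)| ≤ (A/H²)·e^{−ρ·max(|t − s| − 2Δ, 0)} for all s, t. Then there exist constants C > 0 and T_0 > 0, depending only on A, ρ and d, such that for all T ≥ T_0: (2/T²)·∫_0^T ∫_0^t |k(t, s)| ds dt ≤ (C/T)·(Δ/H). -/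

import Mathlib

open MeasureTheory Finset

set_option maxHeartbeats 1000000

/-- Auxiliary: integral of `exp (ρ s)` on `[0, m]`. -/
lemma aux_integral_exp_mul (ρ m : ℝ) (hρ : ρ ≠ 0) :
    (∫ s in (0:ℝ)..m, Real.exp (ρ * s)) = (Real.exp (ρ * m) - 1) / ρ := by
  have hD : ∀ x ∈ Set.uIcc (0:ℝ) m,
      HasDerivAt (fun y => Real.exp (ρ * y) / ρ) (Real.exp (ρ * x)) x := by
    intro x _
    have h1 : HasDerivAt (fun y : ℝ => ρ * y) ρ x := by
      simpa using (hasDerivAt_id x).const_mul ρ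
    have h2 := (h1.exp).div_const ρ
    rwa [mul_div_cancel_right₀ _ hρ] at h2
  have hInt : IntervalIntegrable (fun x => Real.exp (ρ * x)) volume 0 m :=
    (Real.continuous_exp.comp (continuous_const.mul continuous_id)).intervalIntegrable _ _
  rw [intervalIntegral.integral_eq_sub_of_hasDerivAt hD hInt]
  rw [mul_zero, Real.exp_zero]
  ring

/-- Deterministic integration core of the variance bound for the asynchronous kernel
density estimator in the intermediate regime: if `Δ ≥ H^{2/d}` and `k(t, s)` satisfies
the covariance bounds (i)–(iii), then
`(2/T²)·∫₀ᵀ∫₀ᵗ |k(t, s)| ds dt ≤ (C/T)·(Δ/H)` for all `T ≥ T₀`, with constants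
`C, T₀` depending only on `A, ρ, d`. -/
theorem asynchronous_variance_integral_bound_intermediate (d : ℕ) (hd : 3 ≤ d)
    (A ρ : ℝ) (hA : 0 < A) (hρ : 0 < ρ) :
    ∃ C > (0:ℝ), ∃ T0 > (0:ℝ),
      ∀ (h : Fin d → ℝ), (∀ l, h l ∈ Set.Ioo (0:ℝ) 1) →
      ∀ (Δ : ℝ), 0 < Δ → Δ ≤ 1 → (∏ l, h l) ^ ((2:ℝ) / (d:ℝ)) ≤ Δ →
      ∀ (T : ℝ), T0 ≤ T →
      ∀ (k : ℝ → ℝ → ℝ), Measurable (fun ts : ℝ × ℝ => k ts.1 ts.2) →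
        (∀ s ∈ Set.Icc (0:ℝ) T, ∀ t ∈ Set.Icc (0:ℝ) T, |k t s| ≤ A / ∏ l, h l) →
        (∀ s ∈ Set.Icc (0:ℝ) T, ∀ t ∈ Set.Icc (0:ℝ) T, 3 * Δ ≤ |t - s| →
          |k t s| ≤ A * ((3:ℝ) ^ ((d:ℝ)/2) * |t - s| ^ (-(d:ℝ)/2) + 1)) →
        (∀ s ∈ Set.Icc (0:ℝ) T, ∀ t ∈ Set.Icc (0:ℝ) T,
          |k t s| ≤ (A / (∏ l, h l) ^ 2) * Real.exp (-ρ * max (|t - s| - 2 * Δ) 0)) →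
        (2 / T ^ 2) * ∫ t in (0:ℝ)..T, ∫ s in (0:ℝ)..t, |k t s|
          ≤ C / T * (Δ / ∏ l, h l) := by
  have hd3 : (3:ℝ) ≤ (d:ℝ) := by exact_mod_cast hd
  have hd0 : (0:ℝ) < (d:ℝ) := by linarith
  refine ⟨24*A + 14*(A/ρ) + 1, by positivity, 1, one_pos, ?_⟩
  intro h hh Δ hΔ0 hΔ1 hΔH T hT1 k hkm hk1 hk2 hk3
  set H := ∏ l, h l with hHdef
  have hH0 : 0 < H := Finset.prod_pos fun l _ => (hh l).1
  have hH1 : H ≤ 1 := Finset.prod_le_one (fun l _ => (hh l).1.le) (fun l _ => (hh l).2.le)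
  have hT0 : (0:ℝ) < T := lt_of_lt_of_le one_pos hT1
  have hHΔ : H ≤ Δ := by
    calc H = H ^ (1:ℝ) := (Real.rpow_one H).symm
      _ ≤ H ^ ((2:ℝ)/(d:ℝ)) := Real.rpow_le_rpow_of_exponent_ge hH0 hH1
          (by rw [div_le_one hd0]; linarith)
      _ ≤ Δ := hΔH
  have hΔd : H ≤ Δ ^ ((d:ℝ)/2) := by
    have e1 : ((2:ℝ)/(d:ℝ)) * ((d:ℝ)/2) = 1 := by field_simp
    calc H = (H ^ ((2:ℝ)/(d:ℝ))) ^ ((d:ℝ)/2) := by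
          rw [← Real.rpow_mul hH0.le, e1, Real.rpow_one]
      _ ≤ Δ ^ ((d:ℝ)/2) := Real.rpow_le_rpow (by positivity) hΔH (by positivity)
  have hΔH1 : 1 ≤ Δ / H := (one_le_div hH0).2 hHΔ
  have hx0 : 0 < Δ / H := div_pos hΔ0 hH0
  set L := Real.log H⁻¹ with hLdef
  have hL0 : 0 ≤ L := Real.log_nonneg ((one_le_inv_iff₀).2 ⟨hH0, hH1⟩)
  have hεpos : (0:ℝ) < 1 - 2/(d:ℝ) := by
    have : (2:ℝ)/(d:ℝ) ≤ 2/3 := by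
      rw [div_le_div_iff₀ hd0 (by norm_num : (0:ℝ) < 3)]; linarith
    linarith
  have hε3 : (1:ℝ)/3 ≤ 1 - 2/(d:ℝ) := by
    have : (2:ℝ)/(d:ℝ) ≤ 2/3 := by
      rw [div_le_div_iff₀ hd0 (by norm_num : (0:ℝ) < 3)]; linarith
    linarith
  have hLb : L ≤ 3 * (Δ / H) := by
    have h1 : L ≤ H⁻¹ ^ (1 - 2/(d:ℝ)) / (1 - 2/(d:ℝ)) :=
      Real.log_le_rpow_div (inv_nonneg.2 hH0.le) hεpos
    have h2 : H⁻¹ ^ (1 - 2/(d:ℝ)) = H ^ ((2:ℝ)/(d:ℝ)) * H⁻¹ := by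
      rw [Real.inv_rpow hH0.le, ← Real.rpow_neg hH0.le, ← Real.rpow_neg_one H,
        ← Real.rpow_add hH0]
      congr 1; ring
    have h3 : H ^ ((2:ℝ)/(d:ℝ)) * H⁻¹ ≤ Δ * H⁻¹ :=
      mul_le_mul_of_nonneg_right hΔH (inv_nonneg.2 hH0.le)
    calc L ≤ H⁻¹ ^ (1 - 2/(d:ℝ)) / (1 - 2/(d:ℝ)) := h1
      _ ≤ (Δ * H⁻¹) / (1/3) := div_le_div₀ (by positivity) (h2 ▸ h3) (by norm_num) hε3
      _ = 3 * (Δ/H) := by ring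
  set R := 3*Δ + 2/ρ * L with hRdef
  have h2ρL : 0 ≤ 2/ρ * L := mul_nonneg (by positivity) hL0
  have hR3 : 3*Δ ≤ R := le_add_of_nonneg_right h2ρL
  have hR0 : 0 < R := by linarith
  set B := A/H*(3*Δ) + 6*A*(Δ/H) + 2*(A/ρ)*L + A/ρ with hBdef
  have key : ∀ t ∈ Set.Icc (0:ℝ) T, (∫ s in (0:ℝ)..t, |k t s|) ≤ B := by
    rintro t ⟨ht0, htT⟩
    set m3 := max (t - 3*Δ) 0 with hm3
    set mR := max (t - R) 0 with hmR
    have hmR0 : 0 ≤ mR := le_max_right _ _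
    have hm30 : 0 ≤ m3 := le_max_right _ _
    have hmRm3 : mR ≤ m3 := max_le_max (by linarith) le_rfl
    have hm3t : m3 ≤ t := max_le (by linarith) ht0
    have hmRt : mR ≤ t := hmRm3.trans hm3t
    have hmeas : Measurable fun s => |k t s| :=
      (hkm.comp (measurable_const.prodMk measurable_id)).abs
    have hib : ∀ a b : ℝ, 0 ≤ a → a ≤ b → b ≤ t →
        IntervalIntegrable (fun s => |k t s|) volume a b := by
      intro a b ha hab hbt
      apply MeasureTheory.IntegrableOn.intervalIntegrable
      apply Integrable.mono' (g := fun _ => A/H)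
        (integrableOn_const isCompact_uIcc.measure_lt_top.ne)
        hmeas.aestronglyMeasurable.restrict
      refine Filter.eventually_of_mem (self_mem_ae_restrict measurableSet_uIcc) ?_
      intro x hx
      rw [Set.uIcc_of_le hab] at hx
      rw [Real.norm_eq_abs, abs_abs]
      exact hk1 x ⟨le_trans ha hx.1, le_trans hx.2 (hbt.trans htT)⟩ t ⟨ht0, htT⟩
    have i1 : IntervalIntegrable (fun s => |k t s|) volume 0 mR :=
      hib 0 mR le_rfl hmR0 hmRt
    have i2 : IntervalIntegrable (fun s => |k t s|) volume mR m3 :=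
      hib mR m3 hmR0 hmRm3 hm3t
    have i3 : IntervalIntegrable (fun s => |k t s|) volume m3 t :=
      hib m3 t hm30 hm3t le_rfl
    have hsplit : (∫ s in (0:ℝ)..t, |k t s|) =
        (∫ s in (0:ℝ)..mR, |k t s|) + (∫ s in mR..m3, |k t s|)
          + (∫ s in m3..t, |k t s|) := by
      rw [intervalIntegral.integral_add_adjacent_intervals i1 i2,
        intervalIntegral.integral_add_adjacent_intervals (i1.trans i2) i3]
    -- Piece 3 : near the diagonal
    have hP3 : (∫ s in m3..t, |k t s|) ≤ A/H*(3*Δ) := by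
      have hb : ∀ x ∈ Set.uIoc m3 t, ‖|k t x|‖ ≤ A/H := by
        intro x hx
        rw [Set.uIoc_of_le hm3t] at hx
        rw [Real.norm_eq_abs, abs_abs]
        exact hk1 x ⟨le_trans hm30 hx.1.le, hx.2.trans htT⟩ t ⟨ht0, htT⟩
      calc (∫ s in m3..t, |k t s|) ≤ |(∫ s in m3..t, |k t s|)| := le_abs_self _
        _ ≤ A/H * |t - m3| := by
            have := intervalIntegral.norm_integral_le_of_norm_le_const hb
            rwa [Real.norm_eq_abs] at this
        _ ≤ A/H * (3*Δ) := by
            apply mul_le_mul_of_nonneg_left _ (by positivity)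
            rw [abs_of_nonneg (by linarith)]
            have : t - 3*Δ ≤ m3 := le_max_left _ _
            linarith
    -- Piece 2 : intermediate range, polynomial bound
    have hP2 : (∫ s in mR..m3, |k t s|) ≤ 6*A*(Δ/H) + 2*(A/ρ)*L := by
      rcases le_or_gt t (3*Δ) with hcase | hcase
      · have hm3z : m3 = 0 := max_eq_right (by linarith)
        have hmRz : mR = 0 := max_eq_right (by linarith [hR3])
        rw [hm3z, hmRz, intervalIntegral.integral_same]
        positivity
      · have hm3e : m3 = t - 3*Δ := max_eq_left (by linarith)
        set r : ℝ := -(d:ℝ)/2 with hrdef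
        have hr1 : r + 1 < 0 := by rw [hrdef]; linarith
        have hbound : ∀ x ∈ Set.Icc mR m3,
            |k t x| ≤ A * (3:ℝ) ^ ((d:ℝ)/2) * (t - x) ^ r + A := by
          intro x hx
          have hx0 : 0 ≤ x := le_trans hmR0 hx.1
          have hxt : 3*Δ ≤ t - x := by
            have := hx.2; rw [hm3e] at this; linarith
          have habs : |t - x| = t - x := abs_of_nonneg (by linarith)
          have hb := hk2 x ⟨hx0, le_trans (hx.2.trans hm3t) htT⟩ t ⟨ht0, htT⟩
            (by rw [habs]; exact hxt)
          rw [habs] at hb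
          calc |k t x| ≤ A * ((3:ℝ) ^ ((d:ℝ)/2) * (t - x) ^ r + 1) := hb
            _ = A * (3:ℝ) ^ ((d:ℝ)/2) * (t - x) ^ r + A := by ring
        have hcont1 : ContinuousOn (fun s : ℝ => (t - s) ^ r) (Set.uIcc mR m3) := by
          rw [Set.uIcc_of_le hmRm3]
          apply ContinuousOn.rpow_const ((continuous_const.sub continuous_id).continuousOn)
          intro x hx
          refine Or.inl ?_
          show t - x ≠ 0
          have hxx : 3*Δ ≤ t - x := by
            have h2 := hx.2; rw [hm3e] at h2; linarith
          exact ne_of_gt (by linarith)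
        have hcont : ContinuousOn
            (fun s : ℝ => A * (3:ℝ) ^ ((d:ℝ)/2) * (t - s) ^ r + A) (Set.uIcc mR m3) :=
          (continuousOn_const.mul hcont1).add continuousOn_const
        have hmono := intervalIntegral.integral_mono_on hmRm3
          (hib mR m3 hmR0 hmRm3 hm3t) hcont.intervalIntegrable hbound
        have hiir : IntervalIntegrable (fun s : ℝ => (t - s) ^ r) volume mR m3 :=
          hcont1.intervalIntegrable
        have hval : (∫ s in mR..m3, (A * (3:ℝ) ^ ((d:ℝ)/2) * (t - s) ^ r + A))
            = A * (3:ℝ) ^ ((d:ℝ)/2) * (∫ s in mR..m3, (t - s) ^ r) + A * (m3 - mR) := by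
          rw [intervalIntegral.integral_add (hiir.const_mul _) intervalIntegrable_const,
            intervalIntegral.integral_const_mul, intervalIntegral.integral_const,
            smul_eq_mul]
          ring
        have hcomp : (∫ s in mR..m3, (t - s) ^ r)
            = ∫ u in (t - m3)..(t - mR), u ^ r :=
          intervalIntegral.integral_comp_sub_left (fun u => u ^ r) t
        have htm3 : t - m3 = 3*Δ := by rw [hm3e]; ring
        have htmR : 3*Δ ≤ t - mR := by
          have : mR ≤ t - 3*Δ := by rw [← hm3e]; exact hmRm3
          linarith
        have hrval : (∫ u in (t - m3)..(t - mR), u ^ r)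
            = ((t - mR) ^ (r+1) - (t - m3) ^ (r+1)) / (r+1) := by
          apply integral_rpow
          right
          constructor
          · rw [hrdef]; intro hcon; rw [div_eq_iff (by norm_num : (2:ℝ) ≠ 0)] at hcon; linarith
          · rw [Set.uIcc_of_le (by linarith [htm3] : t - m3 ≤ t - mR)]
            intro hcon
            have := hcon.1
            rw [htm3] at this
            linarith
        have hnum : (t - mR) ^ (r+1) ≤ (t - m3) ^ (r+1) :=
          Real.rpow_le_rpow_of_nonpos (by rw [htm3]; linarith) (by linarith [htm3]) hr1.le
        have hpos : (0:ℝ) ≤ (t - mR) ^ (r+1) := Real.rpow_nonneg (by linarith) _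
        have hintb : (∫ u in (t - m3)..(t - mR), u ^ r) ≤ (3*Δ) ^ (r+1) / (-(r+1)) := by
          rw [hrval, htm3]
          have hD : (0:ℝ) < -(r+1) := by linarith
          have e : ((t - mR) ^ (r+1) - (3*Δ) ^ (r+1))/(r+1)
              = ((3*Δ) ^ (r+1) - (t - mR) ^ (r+1))/(-(r+1)) := by
            rw [← neg_div_neg_eq, neg_sub]
          rw [e]
          apply (div_le_div_iff_of_pos_right hD).2
          linarith [hpos]
        have hΔr : (3*Δ) ^ (r+1) = 3 ^ (r+1) * Δ ^ (r+1) :=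
          Real.mul_rpow (by norm_num) hΔ0.le
        have h3pow : (3:ℝ) ^ ((d:ℝ)/2) * 3 ^ (r+1) = 3 := by
          rw [← Real.rpow_add (by norm_num : (0:ℝ) < 3)]
          rw [hrdef, show (d:ℝ)/2 + (-(d:ℝ)/2 + 1) = 1 by ring, Real.rpow_one]
        have hΔpow : Δ ^ (r+1) ≤ Δ / H := by
          have e1 : Δ ^ (r+1) = Δ * Δ ^ r := by
            rw [add_comm, Real.rpow_add hΔ0, Real.rpow_one]
          have e2 : Δ ^ r = (Δ ^ ((d:ℝ)/2))⁻¹ := by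
            rw [hrdef, neg_div, Real.rpow_neg hΔ0.le]
          have e3 : (Δ ^ ((d:ℝ)/2))⁻¹ ≤ H⁻¹ := by
            apply inv_anti₀ hH0 hΔd
          rw [e1, e2, div_eq_mul_inv]
          exact mul_le_mul_of_nonneg_left e3 hΔ0.le
        have hrd : (1:ℝ)/2 ≤ -(r+1) := by rw [hrdef]; linarith
        have hmain : A * (3:ℝ) ^ ((d:ℝ)/2) * (∫ s in mR..m3, (t - s) ^ r)
            ≤ 6*A*(Δ/H) := by
          rw [hcomp]
          have h3d : (0:ℝ) < (3:ℝ) ^ ((d:ℝ)/2) := Real.rpow_pos_of_pos (by norm_num) _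
          calc A * (3:ℝ) ^ ((d:ℝ)/2) * (∫ u in (t - m3)..(t - mR), u ^ r)
              ≤ A * (3:ℝ) ^ ((d:ℝ)/2) * ((3*Δ) ^ (r+1) / (-(r+1))) := by
                apply mul_le_mul_of_nonneg_left hintb (by positivity)
            _ ≤ A * (3:ℝ) ^ ((d:ℝ)/2) * ((3*Δ) ^ (r+1) * 2) := by
                apply mul_le_mul_of_nonneg_left _ (by positivity)
                rw [div_le_iff₀ (by linarith : (0:ℝ) < -(r+1))]
                have h1 : (0:ℝ) ≤ (3*Δ) ^ (r+1) := Real.rpow_nonneg (by linarith) _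
                have h2 : (3*Δ) ^ (r+1) * (1/2) ≤ (3*Δ) ^ (r+1) * (-(r+1)) :=
                  mul_le_mul_of_nonneg_left hrd h1
                linarith only [h2]
            _ = 2 * A * (3 ^ ((d:ℝ)/2) * 3 ^ (r+1)) * Δ ^ (r+1) := by
                rw [hΔr]; ring
            _ = 6 * A * Δ ^ (r+1) := by rw [h3pow]; ring
            _ ≤ 6*A*(Δ/H) := by
                have h1 := mul_le_mul_of_nonneg_left hΔpow hA.le
                linarith only [h1]
        have hlen : A * (m3 - mR) ≤ 2*(A/ρ)*L := by
          have h1 : t - R ≤ mR := le_max_left _ _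
          have h2 : m3 - mR ≤ 2/ρ * L := by
            rw [hRdef] at h1
            rw [hm3e]
            linarith only [h1]
          calc A * (m3 - mR) ≤ A * (2/ρ * L) := mul_le_mul_of_nonneg_left h2 hA.le
            _ = 2*(A/ρ)*L := by ring
        calc (∫ s in mR..m3, |k t s|)
            ≤ ∫ s in mR..m3, (A * (3:ℝ) ^ ((d:ℝ)/2) * (t - s) ^ r + A) := hmono
          _ = A * (3:ℝ) ^ ((d:ℝ)/2) * (∫ s in mR..m3, (t - s) ^ r) + A * (m3 - mR) := hval
          _ ≤ 6*A*(Δ/H) + 2*(A/ρ)*L := add_le_add hmain hlen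
    -- Piece 1 : far range, exponential bound
    have hP1 : (∫ s in (0:ℝ)..mR, |k t s|) ≤ A/ρ := by
      rcases le_or_gt t R with hcase | hcase
      · have hmRz : mR = 0 := max_eq_right (by linarith)
        rw [hmRz, intervalIntegral.integral_same]
        positivity
      · have hmRe : mR = t - R := max_eq_left (by linarith)
        set c0 : ℝ := A/H^2 * Real.exp (-ρ*(t - 2*Δ)) with hc0def
        have hc0 : 0 ≤ c0 := by positivity
        have hbound : ∀ x ∈ Set.Icc (0:ℝ) mR,
            |k t x| ≤ c0 * Real.exp (ρ*x) := by
          intro x hx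
          have hxt : R ≤ t - x := by
            have := hx.2; rw [hmRe] at this; linarith
          have habs : |t - x| = t - x := abs_of_nonneg (by linarith)
          have hmax : max (|t - x| - 2*Δ) 0 = t - x - 2*Δ := by
            rw [habs]; exact max_eq_left (by linarith [hR3, hΔ0.le])
          have hb := hk3 x ⟨hx.1, le_trans (hx.2.trans hmRt) htT⟩ t ⟨ht0, htT⟩
          rw [hmax] at hb
          have harg : -ρ*(t - x - 2*Δ) = -ρ*(t - 2*Δ) + ρ*x := by ring
          calc |k t x| ≤ A/H^2 * Real.exp (-ρ*(t - x - 2*Δ)) := hb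
            _ = c0 * Real.exp (ρ*x) := by
                rw [harg, Real.exp_add, hc0def]; ring
        have hconte : Continuous fun x : ℝ => c0 * Real.exp (ρ*x) :=
          continuous_const.mul (Real.continuous_exp.comp (continuous_const.mul continuous_id))
        have hmono := intervalIntegral.integral_mono_on hmR0
          (hib 0 mR le_rfl hmR0 hmRt) (hconte.intervalIntegrable _ _) hbound
        have hcompe : (∫ s in (0:ℝ)..mR, c0 * Real.exp (ρ*s))
            = c0 * ((Real.exp (ρ*mR) - 1)/ρ) := by
          rw [intervalIntegral.integral_const_mul, aux_integral_exp_mul ρ mR hρ.ne']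
        have hstep1 : c0 * ((Real.exp (ρ*mR) - 1)/ρ) ≤ c0 * (Real.exp (ρ*mR)/ρ) := by
          apply mul_le_mul_of_nonneg_left _ hc0
          gcongr
          linarith [Real.exp_pos (ρ*mR)]
        have harg2 : -ρ*(t - 2*Δ) + ρ*mR = -(ρ*Δ + 2*L) := by
          rw [hmRe, hRdef]
          field_simp
          ring
        have hstep2 : c0 * (Real.exp (ρ*mR)/ρ)
            = A/H^2 * Real.exp (-(ρ*Δ + 2*L)) / ρ := by
          rw [hc0def, ← harg2, Real.exp_add]
          ring
        have hstep3 : Real.exp (-(ρ*Δ + 2*L)) ≤ H^2 := by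
          have e1 : Real.exp (-(ρ*Δ + 2*L)) ≤ Real.exp (-(2*L)) := by
            apply Real.exp_le_exp.2
            linarith only [mul_pos hρ hΔ0]
          have e2 : Real.exp (-(2*L)) = H^2 := by
            have harg3 : -(2*L) = Real.log H + Real.log H := by
              rw [hLdef, Real.log_inv]; ring
            rw [harg3, Real.exp_add, Real.exp_log hH0]; ring
          linarith
        have hstep4 : A/H^2 * Real.exp (-(ρ*Δ + 2*L)) / ρ ≤ A/H^2 * H^2 / ρ := by
          gcongr
        have hstep5 : A/H^2 * H^2 / ρ = A/ρ := by field_simp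
        calc (∫ s in (0:ℝ)..mR, |k t s|)
            ≤ ∫ s in (0:ℝ)..mR, c0 * Real.exp (ρ*s) := hmono
          _ = c0 * ((Real.exp (ρ*mR) - 1)/ρ) := hcompe
          _ ≤ c0 * (Real.exp (ρ*mR)/ρ) := hstep1
          _ = A/H^2 * Real.exp (-(ρ*Δ + 2*L)) / ρ := hstep2
          _ ≤ A/H^2 * H^2 / ρ := hstep4
          _ = A/ρ := hstep5
    rw [hsplit, hBdef]
    linarith only [hP1, hP2, hP3]
  -- outer integral
  have houter : (∫ t in (0:ℝ)..T, ∫ s in (0:ℝ)..t, |k t s|) ≤ B * T := by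
    have hb : ∀ x ∈ Set.uIoc (0:ℝ) T, ‖∫ s in (0:ℝ)..x, |k x s|‖ ≤ B := by
      intro x hx
      rw [Set.uIoc_of_le hT0.le] at hx
      have hnn : 0 ≤ ∫ s in (0:ℝ)..x, |k x s| :=
        intervalIntegral.integral_nonneg hx.1.le (fun u _ => abs_nonneg _)
      rw [Real.norm_eq_abs, abs_of_nonneg hnn]
      exact key x ⟨hx.1.le, hx.2⟩
    have hn := intervalIntegral.norm_integral_le_of_norm_le_const hb
    rw [Real.norm_eq_abs, sub_zero, abs_of_pos hT0] at hn
    calc (∫ t in (0:ℝ)..T, ∫ s in (0:ℝ)..t, |k t s|)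
        ≤ |(∫ t in (0:ℝ)..T, ∫ s in (0:ℝ)..t, |k t s|)| := le_abs_self _
      _ ≤ B * T := hn
  have hBle : B ≤ (9*A + 7*(A/ρ)) * (Δ/H) := by
    have t2 : 2*(A/ρ)*L ≤ 2*(A/ρ)*(3*(Δ/H)) :=
      mul_le_mul_of_nonneg_left hLb (by positivity)
    have t3 : A/ρ ≤ (A/ρ)*(Δ/H) := by
      have := mul_le_mul_of_nonneg_left hΔH1 (div_pos hA hρ).le
      linarith only [this]
    have t1 : A/H*(3*Δ) = 3*A*(Δ/H) := by ring
    rw [hBdef]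
    have expand : (9*A + 7*(A/ρ)) * (Δ/H) = 9*A*(Δ/H) + 7*((A/ρ)*(Δ/H)) := by ring
    rw [expand]
    have t2' : 2*(A/ρ)*L ≤ 6*((A/ρ)*(Δ/H)) := by linarith only [t2]
    linarith only [t1, t2', t3]
  have h2B : 2*B ≤ (24*A + 14*(A/ρ) + 1) * (Δ/H) := by
    have h3 : (0:ℝ) ≤ (6*A + 1) * (Δ/H) :=
      mul_nonneg (by positivity) hx0.le
    linarith only [hBle, h3]
  calc (2 / T ^ 2) * ∫ t in (0:ℝ)..T, ∫ s in (0:ℝ)..t, |k t s|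
      ≤ (2 / T ^ 2) * (B * T) := by
        apply mul_le_mul_of_nonneg_left houter (by positivity)
    _ = (2*B)/T := by field_simp
    _ ≤ ((24*A + 14*(A/ρ) + 1) * (Δ/H))/T := by
        gcongr
    _ = (24*A + 14*(A/ρ) + 1) / T * (Δ / H) := by ring
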